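/- With notation as in the Frenet ODE system: if (λ, λ', V2,...,V_{N1}) solves the system, then the curve γ = λ' α' + Σ_{j=2}^{N1} V_j e_j satisfies γ' = λ α'. -/

import Mathlib

noncomputable section

/-- if `(λ, λ' = V₁, V₂, …, V_{N1})` solves the Frenet ODE system
associated to a unit-speed curve `α` with Frenet frame `e₁ = α', e₂, …, e_{N1}`, then
the curve `γ = λ'α' + Σ_{j=2}^{N1} V_j e_j = Σ_{j=1}^{N1} V_j e_j` satisfies
`γ' = λ α'`. -/
theorem gamma_derivative_eq_lambda_tangent (N1 : ℕ) (hN1 : 2 ≤ N1)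
    {F : Type*} [NormedAddCommGroup F] [NormedSpace ℝ F]
    (α : ℝ → F) (k : ℕ → ℝ → ℝ) (e : ℕ → ℝ → F) (lam : ℝ → ℝ) (V : ℕ → ℝ → ℝ)
    (hα : Differentiable ℝ α) (he : ∀ j, Differentiable ℝ (e j))
    (hV : ∀ j, Differentiable ℝ (V j)) (hlam : Differentiable ℝ lam)
    (hunit : ∀ t, ‖deriv α t‖ = 1)
    (he1 : ∀ t, e 1 t = deriv α t)
    -- Frenet equations:
    (hfr1 : ∀ t, deriv (e 1) t = k 1 t • e 2 t)
    (hfrj : ∀ j, 2 ≤ j → j ≤ N1 - 1 →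
      ∀ t, deriv (e j) t = -(k (j - 1) t) • e (j - 1) t + k j t • e (j + 1) t)
    (hfrN : ∀ t, deriv (e N1) t = -(k (N1 - 1) t) • e (N1 - 1) t)
    -- the ODE system:
    (h1 : ∀ t, deriv lam t = V 1 t)
    (h2 : ∀ t, deriv (V 1) t = lam t + k 1 t * V 2 t)
    (h3 : ∀ j, 2 ≤ j → j ≤ N1 - 1 →
      ∀ t, deriv (V j) t = -(k (j - 1) t * V (j - 1) t) + k j t * V (j + 1) t)
    (h4 : ∀ t, deriv (V N1) t = -(k (N1 - 1) t * V (N1 - 1) t)) :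
    ∀ t, deriv (fun s => ∑ j ∈ Finset.Icc 1 N1, V j s • e j s) t
      = lam t • e 1 t := by

  intro t
  have hdiff : ∀ j, DifferentiableAt ℝ (fun s => V j s • e j s) t :=
    fun j => ((hV j) t).smul ((he j) t)
  rw [deriv_fun_sum (fun j _ => hdiff j)]
  set A : ℕ → F := fun j => deriv (V j) t • e j t + V j t • deriv (e j) t with hA
  have hterm : ∀ j, deriv (fun s => V j s • e j s) t = A j := by
    intro j
    rw [deriv_fun_smul ((hV j) t) ((he j) t), hA]
    abel_nf
  simp only [hterm]
  have key : ∀ n, 1 ≤ n → n ≤ N1 - 1 →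
      ∑ j ∈ Finset.Icc 1 n, A j
        = lam t • e 1 t + (k n t * V (n + 1) t) • e n t
          + (k n t * V n t) • e (n + 1) t := by
    intro n hn
    induction n, hn using Nat.le_induction with
    | base =>
      intro _
      simp only [Finset.Icc_self, Finset.sum_singleton, hA, h2 t, hfr1 t]
      module
    | succ n hn ih =>
      intro hle
      rw [Finset.sum_Icc_succ_top (by omega : 1 ≤ n + 1), ih (by omega)]
      have hAn : A (n + 1) = (-(k n t * V n t) + k (n + 1) t * V (n + 2) t) • e (n + 1) t
          + V (n + 1) t • (-(k n t) • e n t + k (n + 1) t • e (n + 2) t) := by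
        have e1 := h3 (n + 1) (by omega) hle t
        have e2 := hfrj (n + 1) (by omega) hle t
        simp only [Nat.add_sub_cancel] at e1 e2
        rw [hA]
        simp only [e1, e2]
      rw [hAn]
      module
  have hsplit : N1 - 1 + 1 = N1 := by omega
  rw [← hsplit, Finset.sum_Icc_succ_top (by omega : 1 ≤ N1 - 1 + 1),
    key (N1 - 1) (by omega) le_rfl]
  have hAN : A (N1 - 1 + 1) = (-(k (N1 - 1) t * V (N1 - 1) t)) • e N1 t
      + V N1 t • (-(k (N1 - 1) t) • e (N1 - 1) t) := by
    rw [hA]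
    simp only [hsplit, h4 t, hfrN t]
  rw [hAN, hsplit]
  module
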